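/- For every real x with 0 ≤ x < φ², the sequence of iterates g^[n](x) (g applied n times to x) is nonincreasing in n and converges to 0 as n → ∞. -/
import Mathlib

open Filter Topology

/-- The golden ratio `φ = (√5 − 1)/2`. -/
noncomputable def phi : ℝ := (Real.sqrt 5 - 1) / 2

/-- The two-level recursion map `g(x) = (1 − (1 − x)²)² = x⁴ − 4x³ + 4x²`. -/
def g (x : ℝ) : ℝ := (1 - (1 - x) ^ 2) ^ 2

/-- For `0 ≤ x < φ²` the iterates `g^[n](x)` are nonincreasing in `n` and converge to `0`. -/
theorem g_iterates_tendsto_zero (x : ℝ) (h1 : 0 ≤ x) (h2 : x < phi ^ 2) :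
    Antitone (fun n => g^[n] x) ∧ Tendsto (fun n => g^[n] x) atTop (𝓝 0) := by
  have hs2 : Real.sqrt 5 ^ 2 = 5 := Real.sq_sqrt (by norm_num)
  have hs : 2 < Real.sqrt 5 := by nlinarith [Real.sqrt_nonneg 5]
  set s := Real.sqrt 5 with hsdef
  have hphi : phi ^ 2 = (3 - s) / 2 := by
    unfold phi; rw [← hsdef]; nlinarith [hs2]
  have hx2 : x < (3 - s) / 2 := hphi ▸ h2
  have hxhalf : x < 1/2 := by nlinarith
  set r : ℝ := x * (2 - x) ^ 2 with hr
  have hr0 : 0 ≤ r := by positivity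
  have hr1 : r < 1 := by
    nlinarith [mul_pos (show (0:ℝ) < (3 - s)/2 - x by linarith)
      (show (0:ℝ) < (3 + s)/2 - x by nlinarith), sq_nonneg x]
  have key : ∀ y, 0 ≤ y → y ≤ x → g y ≤ r * y ∧ 0 ≤ g y := by
    intro y hy0 hyx
    constructor
    · have hgy : g y = y * (y * (2 - y) ^ 2) := by unfold g; ring
      rw [hgy, hr]
      have hmono : y * (2 - y) ^ 2 ≤ x * (2 - x) ^ 2 := by
        nlinarith [sq_nonneg (x - y), sq_nonneg (x + y), mul_nonneg hy0 (sub_nonneg.2 hyx)]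
      nlinarith [mul_le_mul_of_nonneg_left hmono hy0]
    · unfold g; positivity
  have hinv : ∀ n, 0 ≤ g^[n] x ∧ g^[n] x ≤ r ^ n * x := by
    intro n
    induction n with
    | zero => simp [h1]
    | succ n ih =>
      obtain ⟨ih0, ih1⟩ := ih
      have hle : g^[n] x ≤ x := by
        calc g^[n] x ≤ r ^ n * x := ih1
          _ ≤ 1 * x := mul_le_mul_of_nonneg_right (pow_le_one₀ hr0 hr1.le) h1
          _ = x := one_mul x
      have hk := key _ ih0 hle
      rw [Function.iterate_succ_apply']
      refine ⟨hk.2, ?_⟩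
      calc g (g^[n] x) ≤ r * g^[n] x := hk.1
        _ ≤ r * (r ^ n * x) := mul_le_mul_of_nonneg_left ih1 hr0
        _ = r ^ (n + 1) * x := by ring
  constructor
  · apply antitone_nat_of_succ_le
    intro n
    obtain ⟨h0, hle⟩ := hinv n
    have hx' : g^[n] x ≤ x := by
      calc g^[n] x ≤ r ^ n * x := hle
        _ ≤ 1 * x := mul_le_mul_of_nonneg_right (pow_le_one₀ hr0 hr1.le) h1
        _ = x := one_mul x
    have hk := (key _ h0 hx').1
    rw [Function.iterate_succ_apply']
    calc g (g^[n] x) ≤ r * g^[n] x := hk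
      _ ≤ 1 * g^[n] x := mul_le_mul_of_nonneg_right hr1.le h0
      _ = g^[n] x := one_mul _
  · apply squeeze_zero (fun n => (hinv n).1) (fun n => (hinv n).2)
    have h := (tendsto_pow_atTop_nhds_zero_of_lt_one hr0 hr1).mul_const x
    simpa using h
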